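/- Let p > 3·lcm(d,e). Then the arithmetic polygon of [-e,d], i.e. the piecewise-linear function through the points (k, p_{[-e,d]}(k)) for k = 0,...,d+e, is convex; moreover, (k, p_{[-e,d]}(k)) with 0 < k < d+e is a vertex (point of strict convexity) if and only if the minimum defining p_{[-e,d]}(k) is attained at exactly one pair of I_k. -/

import Mathlib

/-- The set `I_k = {(m,n) : m+n+1 = k, -1/e ≤ m/e - n/d ≤ 1/d, 0 ≤ m < e, 0 ≤ n < d}`. -/
def Ik (d e : ℕ) (k : ℤ) : Set (ℤ × ℤ) :=
  {q | q.1 + q.2 + 1 = k ∧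
    -(1 : ℚ) / e ≤ (q.1 : ℚ) / e - (q.2 : ℚ) / d ∧
    (q.1 : ℚ) / e - (q.2 : ℚ) / d ≤ 1 / d ∧
    0 ≤ q.1 ∧ q.1 < e ∧ 0 ≤ q.2 ∧ q.2 < d}

/-- `Q(n) = (1/(p-1)) · Σ_{i=1}^n ⌈(pi-n)/d⌉`; this is `p_{[0,d]}(n)`.  Taking `d := e`
gives `P(m) = p_{[0,e]}(m)`. -/
noncomputable def Qfn (p d : ℕ) (n : ℤ) : ℚ :=
  (1 / ((p : ℚ) - 1)) * ∑ i ∈ Finset.Icc (1 : ℤ) n, (⌈((p : ℚ) * i - n) / d⌉ : ℚ)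

/-- The set of values `P(m) + Q(n)` for `(m,n) ∈ I_k`. -/
noncomputable def Vals (p d e : ℕ) (k : ℤ) : Set ℚ :=
  (fun q : ℤ × ℤ => Qfn p e q.1 + Qfn p d q.2) '' Ik d e k

/-- `v = p_{[-e,d]}(k)`: it is `0` at `k = 0`, `(d+e)/2` at `k = d+e`, and the minimum of
`P(m)+Q(n)` over `I_k` for `1 ≤ k ≤ d+e-1`. -/
noncomputable def IsPval (p d e : ℕ) (k : ℤ) (v : ℚ) : Prop :=
  (k = 0 ∧ v = 0) ∨ (k = (d : ℤ) + e ∧ v = ((d : ℚ) + e) / 2) ∨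
    (1 ≤ k ∧ k ≤ (d : ℤ) + e - 1 ∧ IsLeast (Vals p d e k) v)

/-- The set `V_k` of minimizers in `I_k`, where `v` is the minimum value `p_{[-e,d]}(k)`. -/
noncomputable def Vmin (p d e : ℕ) (k : ℤ) (v : ℚ) : Set (ℤ × ℤ) :=
  {q ∈ Ik d e k | Qfn p e q.1 + Qfn p d q.2 = v}

namespace Stmt9

noncomputable def T (p d : ℕ) (n : ℤ) : ℤ := ∑ i ∈ Finset.Icc (1:ℤ) n, ⌈((p:ℚ)*i - n)/d⌉

lemma ceil_mono_succ (d : ℕ) (a : ℤ) : ⌈((a:ℚ))/d⌉ ≤ ⌈((a:ℚ)+1)/d⌉ := by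
  apply Int.ceil_le_ceil
  gcongr
  linarith

lemma ceil_succ_le (d : ℕ) (hd : 0 < d) (a : ℤ) (h : ¬ (d:ℤ) ∣ a) :
    ⌈((a:ℚ)+1)/d⌉ ≤ ⌈((a:ℚ))/d⌉ := by
  have hd' : (0:ℚ) < d := by exact_mod_cast hd
  rw [Int.ceil_le, div_le_iff₀ hd']
  have h1 : (a:ℚ) ≤ (⌈((a:ℚ))/d⌉ : ℚ) * d := by
    have := Int.le_ceil ((a:ℚ)/d)
    calc (a:ℚ) = (a:ℚ)/d * d := by field_simp
    _ ≤ _ := mul_le_mul_of_nonneg_right this hd'.le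
  have h2 : (a:ℚ) ≠ (⌈((a:ℚ))/d⌉ : ℚ) * d := by
    intro hc
    exact h ⟨⌈((a:ℚ))/d⌉, by exact_mod_cast hc.trans (mul_comm _ _)⟩
  have h3 : (a:ℤ) + 1 ≤ ⌈((a:ℚ))/d⌉ * d := by
    have hlt : (a:ℚ) < (⌈((a:ℚ))/d⌉ : ℚ) * d := lt_of_le_of_ne h1 h2
    exact_mod_cast hlt
  exact_mod_cast h3

lemma ceil_succ_ge (d : ℕ) (hd : 0 < d) (a : ℤ) :
    ⌈((a:ℚ)+1)/d⌉ ≤ ⌈((a:ℚ))/d⌉ + 1 := by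
  have hd' : (0:ℚ) < d := by exact_mod_cast hd
  have hd1 : (1:ℚ) ≤ d := by exact_mod_cast hd
  have h2 : ((a:ℚ)+1)/d ≤ (a:ℚ)/d + 1 := by
    rw [div_le_iff₀ hd', add_mul, div_mul_cancel₀ _ (ne_of_gt hd')]
    linarith
  calc ⌈((a:ℚ)+1)/d⌉ ≤ ⌈(a:ℚ)/d + 1⌉ := Int.ceil_le_ceil h2
  _ = ⌈(a:ℚ)/d⌉ + 1 := by
    rw [show (1:ℚ) = ((1:ℤ):ℚ) by norm_num, Int.ceil_add_intCast]

lemma deltaT (p d : ℕ) (hd : 0 < d) (hpd : Nat.Coprime p d) (n : ℤ) (hn0 : 0 ≤ n)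
    (hnd : n + 1 ≤ d) :
    ∃ w : ℤ, 0 ≤ w ∧ w ≤ 1 ∧
      T p d (n+1) - T p d n = ⌈((n:ℚ)+1)*((p:ℚ)-1)/d⌉ - w := by
  have hins : Finset.Icc (1:ℤ) (n+1) = insert (n+1) (Finset.Icc 1 n) := by
    ext x
    simp only [Finset.mem_Icc, Finset.mem_insert]
    omega
  have hsum : T p d (n+1)
      = (∑ i ∈ Finset.Icc (1:ℤ) n, ⌈((p:ℚ)*i - ((n:ℚ)+1))/d⌉) + ⌈((p:ℚ)*((n:ℚ)+1) - ((n:ℚ)+1))/d⌉ := by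
    rw [T, hins, Finset.sum_insert (by simp [Finset.mem_Icc])]
    push_cast
    ring
  set δ : ℤ → ℤ := fun i => ⌈((p:ℚ)*i - ((n:ℚ)+1))/d⌉ - ⌈((p:ℚ)*i - n)/d⌉ with hδdef
  have key : ∀ i : ℤ, ((p:ℚ)*i - ((n:ℚ)+1)) = (((p:ℤ)*i - (n+1) : ℤ) : ℚ)
      ∧ ((p:ℚ)*i - n) = ((((p:ℤ)*i - (n+1) : ℤ) : ℚ) + 1) := by
    intro i; constructor <;> push_cast <;> ring
  have hδ0 : ∀ i : ℤ, δ i ≤ 0 := by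
    intro i
    have := ceil_mono_succ d ((p:ℤ)*i - (n+1))
    simp only [hδdef, (key i).1, (key i).2]
    omega
  have hδ1 : ∀ i : ℤ, ¬ (d:ℤ) ∣ ((p:ℤ)*i - (n+1)) → 0 ≤ δ i := by
    intro i h
    have := ceil_succ_le d hd ((p:ℤ)*i - (n+1)) h
    simp only [hδdef, (key i).1, (key i).2]
    omega
  have hδm1 : ∀ i : ℤ, -1 ≤ δ i := by
    intro i
    have := ceil_succ_ge d hd ((p:ℤ)*i - (n+1))
    simp only [hδdef, (key i).1, (key i).2]
    omega
  -- the filter of indices where division happens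
  set F := (Finset.Icc (1:ℤ) n).filter (fun i => (d:ℤ) ∣ ((p:ℤ)*i - (n+1))) with hF
  have hcop : IsCoprime (d:ℤ) (p:ℤ) := by
    rw [Int.isCoprime_iff_gcd_eq_one]
    simpa [Int.gcd_natCast_natCast, Nat.coprime_comm] using hpd
  have hFcard : F.card ≤ 1 := by
    rw [Finset.card_le_one]
    intro i hi j hj
    rw [hF, Finset.mem_filter, Finset.mem_Icc] at hi hj
    by_contra hne
    have hdvd : (d:ℤ) ∣ (p:ℤ)*(i - j) := by
      have := dvd_sub hi.2 hj.2
      simpa [mul_sub] using this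
    have hdij : (d:ℤ) ∣ (i - j) := hcop.dvd_of_dvd_mul_left hdvd
    have h5 : (d:ℤ) ≤ |i - j| := Int.le_of_dvd (abs_pos.2 (sub_ne_zero.2 hne)) ((dvd_abs _ _).2 hdij)
    have h6 : |i - j| ≤ n - 1 := abs_sub_le_iff.mpr ⟨by omega, by omega⟩
    omega
  have hsplit : ∑ i ∈ Finset.Icc (1:ℤ) n, δ i
      = (∑ i ∈ F, δ i) + ∑ i ∈ (Finset.Icc (1:ℤ) n).filter (fun i => ¬ (d:ℤ) ∣ ((p:ℤ)*i - (n+1))), δ i := by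
    rw [hF]
    exact (Finset.sum_filter_add_sum_filter_not _ _ _).symm
  have hlow : -1 ≤ ∑ i ∈ Finset.Icc (1:ℤ) n, δ i := by
    rw [hsplit]
    have h1 : -(F.card : ℤ) ≤ ∑ i ∈ F, δ i := by
      calc -(F.card : ℤ) = ∑ _i ∈ F, (-1 : ℤ) := by simp
      _ ≤ _ := Finset.sum_le_sum (fun i _ => hδm1 i)
    have h2 : (0:ℤ) ≤ ∑ i ∈ (Finset.Icc (1:ℤ) n).filter (fun i => ¬ (d:ℤ) ∣ ((p:ℤ)*i - (n+1))), δ i := by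
      apply Finset.sum_nonneg
      intro i hi
      rw [Finset.mem_filter] at hi
      exact hδ1 i hi.2
    have : -(F.card : ℤ) ≥ -1 := by
      have := hFcard; omega
    omega
  have hhigh : ∑ i ∈ Finset.Icc (1:ℤ) n, δ i ≤ 0 :=
    Finset.sum_nonpos (fun i _ => hδ0 i)
  refine ⟨-∑ i ∈ Finset.Icc (1:ℤ) n, δ i, by omega, by omega, ?_⟩
  have htop : ⌈((p:ℚ)*((n:ℚ)+1) - ((n:ℚ)+1))/d⌉ = ⌈((n:ℚ)+1)*((p:ℚ)-1)/d⌉ := by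
    congr 1
    ring
  have : T p d (n+1) - T p d n
      = (∑ i ∈ Finset.Icc (1:ℤ) n, δ i) + ⌈((p:ℚ)*((n:ℚ)+1) - ((n:ℚ)+1))/d⌉ := by
    rw [hsum, T, hδdef]
    rw [Finset.sum_sub_distrib]
    push_cast
    ring
  omega


lemma deltaT_lb (p d : ℕ) (hd : 0 < d) (hpd : Nat.Coprime p d) (n : ℤ) (hn0 : 0 ≤ n)
    (hnd : n + 1 ≤ d) :
    ((n:ℚ)+1)*((p:ℚ)-1)/d - 1 ≤ ((T p d (n+1) - T p d n : ℤ) : ℚ) := by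
  obtain ⟨w, hw0, hw1, heq⟩ := deltaT p d hd hpd n hn0 hnd
  rw [heq]
  push_cast
  have h1 := Int.le_ceil (((n:ℚ)+1)*((p:ℚ)-1)/d)
  have h2 : ((w:ℚ)) ≤ 1 := by exact_mod_cast hw1
  linarith

lemma deltaT_ub (p d : ℕ) (hd : 0 < d) (hpd : Nat.Coprime p d) (n : ℤ) (hn0 : 0 ≤ n)
    (hnd : n + 1 ≤ d) :
    ((T p d (n+1) - T p d n : ℤ) : ℚ) < ((n:ℚ)+1)*((p:ℚ)-1)/d + 1 := by
  obtain ⟨w, hw0, hw1, heq⟩ := deltaT p d hd hpd n hn0 hnd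
  rw [heq]
  push_cast
  have h1 := Int.ceil_lt_add_one (((n:ℚ)+1)*((p:ℚ)-1)/d)
  have h2 : (0:ℚ) ≤ (w:ℚ) := by exact_mod_cast hw0
  linarith

lemma T_convex (p d : ℕ) (hd : 0 < d) (hpd : Nat.Coprime p d) (h2d : 2*(d:ℚ) ≤ (p:ℚ) - 1)
    (n : ℤ) (h1 : 1 ≤ n) (h2 : n + 1 ≤ d) :
    2 * T p d n < T p d (n-1) + T p d (n+1) := by
  have hA := deltaT_lb p d hd hpd n (by linarith) h2
  have hB := deltaT_ub p d hd hpd (n-1) (by linarith) (by push_cast; linarith)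
  rw [show n - 1 + 1 = n by ring] at hB
  have hd' : (0:ℚ) < d := by exact_mod_cast hd
  have key : ((2 * T p d n : ℤ) : ℚ) < ((T p d (n-1) + T p d (n+1) : ℤ) : ℚ) := by
    push_cast at hA hB ⊢
    have hgap : ((n:ℚ)+1)*((p:ℚ)-1)/d - ((n:ℚ)-1+1)*((p:ℚ)-1)/d = ((p:ℚ)-1)/d := by
      field_simp
      ring
    have h3 : (2:ℚ) ≤ ((p:ℚ)-1)/d := by
      rw [le_div_iff₀ hd']
      linarith
    linarith
  exact_mod_cast key

lemma ceil_int_add_frac (q : ℤ) (d : ℕ) (hd : 0 < d) (x : ℚ) (h0 : -(d:ℚ) < x) (h1 : x ≤ 0) :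
    ⌈((q:ℚ) + x/d)⌉ = q := by
  have hd' : (0:ℚ) < d := by exact_mod_cast hd
  rw [add_comm, Int.ceil_add_intCast]
  have hc : ⌈x/d⌉ = 0 := by
    rw [Int.ceil_eq_iff]
    push_cast
    constructor
    · rw [lt_div_iff₀ hd']; linarith
    · exact div_nonpos_of_nonpos_of_nonneg h1 hd'.le
  omega

lemma slope_lt (p d e : ℕ) (hd : 0 < d) (he : 0 < e) (hpd : Nat.Coprime p d)
    (hpe : Nat.Coprime p e) (m n : ℤ) (hm0 : 0 ≤ m) (hme : m + 1 ≤ e)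
    (hn0 : 0 ≤ n) (hnd : n + 1 ≤ d)
    (H : 3 * ((d:ℚ)*e) ≤ ((p:ℚ)-1) * ((e:ℚ)*((n:ℚ)+1) - (d:ℚ)*((m:ℚ)+1))) :
    T p e (m+1) - T p e m < T p d (n+1) - T p d n := by
  have hA := deltaT_lb p d hd hpd n hn0 hnd
  have hB := deltaT_ub p e he hpe m hm0 hme
  have hd' : (0:ℚ) < d := by exact_mod_cast hd
  have he' : (0:ℚ) < e := by exact_mod_cast he
  have key : ((T p e (m+1) - T p e m : ℤ) : ℚ) < ((T p d (n+1) - T p d n : ℤ) : ℚ) := by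
    have hgap : ((n:ℚ)+1)*((p:ℚ)-1)/d - ((m:ℚ)+1)*((p:ℚ)-1)/e
        = ((p:ℚ)-1) * ((e:ℚ)*((n:ℚ)+1) - (d:ℚ)*((m:ℚ)+1)) / ((d:ℚ)*e) := by
      field_simp
    have h3 : (3:ℚ) ≤ ((p:ℚ)-1) * ((e:ℚ)*((n:ℚ)+1) - (d:ℚ)*((m:ℚ)+1)) / ((d:ℚ)*e) := by
      rw [le_div_iff₀ (by positivity)]
      linarith
    linarith
  exact_mod_cast key

lemma T_pred (p d : ℕ) (hd : 0 < d) (hpd : Nat.Coprime p d) :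
    2 * T p d ((d:ℤ) - 1) = ((d:ℤ) - 1) * ((p:ℤ) - 1) := by
  have hd' : (0:ℚ) < d := by exact_mod_cast hd
  have hcop : IsCoprime (d:ℤ) (p:ℤ) := by
    rw [Int.isCoprime_iff_gcd_eq_one]
    simpa [Int.gcd_natCast_natCast, Nat.coprime_comm] using hpd
  set F : ℤ → ℤ := fun i => ⌈((p:ℚ)*i - ((d:ℚ)-1))/d⌉ with hFdef
  have hT : T p d ((d:ℤ) - 1) = ∑ i ∈ Finset.Icc (1:ℤ) ((d:ℤ)-1), F i := by
    rw [T]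
    apply Finset.sum_congr rfl
    intro i _
    congr 2
    push_cast
    ring
  have claim : ∀ i ∈ Finset.Icc (1:ℤ) ((d:ℤ)-1), F i + F ((d:ℤ) - i) = (p:ℤ) - 1 := by
    intro i hi
    rw [Finset.mem_Icc] at hi
    set a : ℤ := (p:ℤ) * i with ha
    have hndvd : ¬ (d:ℤ) ∣ a := by
      intro hdvd
      have : (d:ℤ) ∣ i := hcop.dvd_of_dvd_mul_left hdvd
      have := Int.le_of_dvd (by omega) this
      omega
    set q : ℤ := a / d with hq
    set r : ℤ := a % d with hr
    have hqr : (d:ℤ) * q + r = a := Int.mul_ediv_add_emod a d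
    have hr0 : 0 ≤ r := Int.emod_nonneg a (by exact_mod_cast hd.ne')
    have hrd : r < d := Int.emod_lt_of_pos a (by exact_mod_cast hd)
    have hrne : r ≠ 0 := by
      intro h0
      exact hndvd (Int.dvd_of_emod_eq_zero (by rw [← hr, h0]))
    have hrq : (1:ℚ) ≤ (r:ℚ) := by exact_mod_cast (by omega : (1:ℤ) ≤ r)
    have hrdq : (r:ℚ) < (d:ℚ) := by exact_mod_cast hrd
    have hF1 : F i = q := by
      have harg : ((p:ℚ)*i - ((d:ℚ)-1)) / d = (q:ℚ) + (((r:ℚ) - d + 1))/d := by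
        have h1 : ((p:ℚ)*i) = (((d:ℤ) * q + r : ℤ):ℚ) := by
          rw [hqr]; push_cast [ha]; ring
        rw [h1]
        push_cast
        field_simp
        ring
      have hrint : (r:ℚ) ≤ (d:ℚ) - 1 := by exact_mod_cast (by omega : r ≤ (d:ℤ) - 1)
      rw [hFdef]
      simp only [harg]
      exact ceil_int_add_frac q d hd _ (by linarith) (by linarith)
    have hF2 : F ((d:ℤ) - i) = (p:ℤ) - 1 - q := by
      have harg : ((p:ℚ)*((d:ℤ) - i : ℤ) - ((d:ℚ)-1)) / d
          = (((p:ℤ) - 1 - q : ℤ):ℚ) + ((1 - (r:ℚ)))/d := by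
        have h1 : ((p:ℚ)*((d:ℤ) - i : ℤ)) = (p:ℚ)*d - (((d:ℤ) * q + r : ℤ):ℚ) := by
          rw [hqr]; push_cast [ha]; ring
        rw [h1]
        push_cast
        field_simp
        ring
      rw [hFdef]
      simp only [harg]
      exact ceil_int_add_frac ((p:ℤ) - 1 - q) d hd _ (by linarith) (by linarith)
    rw [hF1, hF2]
    ring
  have hswap : ∑ i ∈ Finset.Icc (1:ℤ) ((d:ℤ)-1), F i
      = ∑ i ∈ Finset.Icc (1:ℤ) ((d:ℤ)-1), F ((d:ℤ) - i) := by
    refine Finset.sum_nbij' (fun i => (d:ℤ) - i) (fun i => (d:ℤ) - i) ?_ ?_ ?_ ?_ ?_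
    · intro x hx; simp only [Finset.mem_Icc] at hx ⊢; omega
    · intro x hx; simp only [Finset.mem_Icc] at hx ⊢; omega
    · intro x _; show (d:ℤ) - ((d:ℤ) - x) = x; ring
    · intro x _; show (d:ℤ) - ((d:ℤ) - x) = x; ring
    · intro x _
      show F x = F ((d:ℤ) - ((d:ℤ) - x))
      congr 1
      ring
  have hcard : (Finset.Icc (1:ℤ) ((d:ℤ)-1)).card = d - 1 := by
    rw [Int.card_Icc]
    omega
  have h2T : 2 * T p d ((d:ℤ) - 1)
      = ∑ i ∈ Finset.Icc (1:ℤ) ((d:ℤ)-1), (F i + F ((d:ℤ) - i)) := by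
    rw [Finset.sum_add_distrib, hT, ← hswap]
    ring
  rw [h2T, Finset.sum_congr rfl claim, Finset.sum_const, hcard, nsmul_eq_mul]
  have hc : ((d - 1 : ℕ) : ℤ) = (d:ℤ) - 1 := by omega
  rw [hc]

lemma Qfn_T (p d : ℕ) (n : ℤ) : Qfn p d n = (T p d n : ℚ) / ((p:ℚ) - 1) := by
  rw [Qfn, T]
  push_cast
  ring

lemma Qfn_zero (p d : ℕ) : Qfn p d 0 = 0 := by
  simp [Qfn]

lemma T_pos (p d : ℕ) (hdp : d < p) (n : ℤ) (h1 : 1 ≤ n) (h2 : n ≤ d) : 0 < T p d n := by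
  rw [T]
  apply Finset.sum_pos
  · intro i hi
    rw [Finset.mem_Icc] at hi
    apply Int.ceil_pos.2
    apply div_pos
    · have hp' : (d:ℚ) < p := by exact_mod_cast hdp
      have hi1 : (1:ℚ) ≤ (i:ℚ) := by exact_mod_cast hi.1
      have hn : (n:ℚ) ≤ d := by exact_mod_cast h2
      nlinarith [hp'.le, hi1]
    · exact_mod_cast (by omega : 0 < d)
  · exact ⟨1, by rw [Finset.mem_Icc]; omega⟩

lemma Qfn_pos (p d : ℕ) (hp2 : 2 ≤ p) (hdp : d < p) (n : ℤ) (h1 : 1 ≤ n) (h2 : n ≤ d) :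
    0 < Qfn p d n := by
  rw [Qfn_T]
  apply div_pos
  · exact_mod_cast T_pos p d hdp n h1 h2
  · have : (2:ℚ) ≤ p := by exact_mod_cast hp2
    linarith

lemma Qfn_nonneg (p d : ℕ) (hp2 : 2 ≤ p) (hdp : d < p) (n : ℤ) (h1 : 0 ≤ n) (h2 : n ≤ d) :
    0 ≤ Qfn p d n := by
  rcases eq_or_lt_of_le h1 with h | h
  · rw [← h, Qfn_zero]
  · exact (Qfn_pos p d hp2 hdp n (by omega) h2).le

lemma mem_Ik (d e : ℕ) (hd : 0 < d) (he : 0 < e) (k : ℤ) (q : ℤ × ℤ) :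
    q ∈ Ik d e k ↔ q.1 + q.2 + 1 = k ∧ -(d:ℤ) ≤ d * q.1 - e * q.2 ∧
      (d:ℤ) * q.1 - e * q.2 ≤ e ∧ 0 ≤ q.1 ∧ q.1 < e ∧ 0 ≤ q.2 ∧ q.2 < d := by
  have hd' : (0:ℚ) < d := by exact_mod_cast hd
  have he' : (0:ℚ) < e := by exact_mod_cast he
  have hde : (0:ℚ) < (e:ℚ)*d := by positivity
  have h1 : (q.1:ℚ)/e - (q.2:ℚ)/d = (((d:ℤ)*q.1 - e*q.2 : ℤ):ℚ) / ((e:ℚ)*d) := by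
    push_cast
    field_simp
  have h2 : -(1:ℚ)/e = (((-(d:ℤ)) : ℤ):ℚ) / ((e:ℚ)*d) := by
    push_cast
    field_simp
  have h3 : (1:ℚ)/d = (((e:ℕ):ℤ):ℚ)/((e:ℚ)*d) := by
    push_cast
    field_simp
  constructor
  · rintro ⟨ha, hb, hc, hrest⟩
    rw [h1, h2] at hb
    rw [h1, h3] at hc
    refine ⟨ha, ?_, ?_, hrest⟩
    · exact_mod_cast (div_le_div_iff_of_pos_right hde).1 hb
    · exact_mod_cast (div_le_div_iff_of_pos_right hde).1 hc
  · rintro ⟨ha, hb, hc, hrest⟩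
    refine ⟨ha, ?_, ?_, hrest⟩
    · rw [h1, h2]
      rw [div_le_div_iff_of_pos_right hde]
      exact_mod_cast hb
    · rw [h1, h3]
      rw [div_le_div_iff_of_pos_right hde]
      exact_mod_cast hc

lemma Qfn_diff (p d : ℕ) (a b : ℤ) :
    Qfn p d a - Qfn p d b = ((T p d a - T p d b : ℤ) : ℚ) / ((p:ℚ) - 1) := by
  rw [Qfn_T, Qfn_T]
  push_cast
  ring

lemma Qfn_convex (p d : ℕ) (hd : 0 < d) (hpd : Nat.Coprime p d) (hp2 : 2 ≤ p)
    (h2d : 2*(d:ℚ) ≤ (p:ℚ) - 1) (n : ℤ) (h1 : 1 ≤ n) (h2 : n + 1 ≤ d) :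
    2 * Qfn p d n < Qfn p d (n-1) + Qfn p d (n+1) := by
  have hT := T_convex p d hd hpd h2d n h1 h2
  have hpQ : (0:ℚ) < (p:ℚ) - 1 := by
    have : (2:ℚ) ≤ p := by exact_mod_cast hp2
    linarith
  have h1' : Qfn p d (n+1) - Qfn p d n = ((T p d (n+1) - T p d n : ℤ) : ℚ) / ((p:ℚ)-1) :=
    Qfn_diff p d _ _
  have h2' : Qfn p d n - Qfn p d (n-1) = ((T p d n - T p d (n-1) : ℤ) : ℚ) / ((p:ℚ)-1) :=
    Qfn_diff p d _ _
  have hc : ((T p d n - T p d (n-1) : ℤ) : ℚ) < ((T p d (n+1) - T p d n : ℤ) : ℚ) := by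
    exact_mod_cast (by omega : T p d n - T p d (n-1) < T p d (n+1) - T p d n)
  have := div_lt_div_of_pos_right hc hpQ
  linarith

lemma Qfn_slope_lt (p d e : ℕ) (hd : 0 < d) (he : 0 < e) (hpd : Nat.Coprime p d)
    (hpe : Nat.Coprime p e) (hp2 : 2 ≤ p) (m n : ℤ) (hm0 : 0 ≤ m) (hme : m + 1 ≤ e)
    (hn0 : 0 ≤ n) (hnd : n + 1 ≤ d)
    (H : 3 * ((d:ℚ)*e) ≤ ((p:ℚ)-1) * ((e:ℚ)*((n:ℚ)+1) - (d:ℚ)*((m:ℚ)+1))) :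
    Qfn p e (m+1) - Qfn p e m < Qfn p d (n+1) - Qfn p d n := by
  have hT := slope_lt p d e hd he hpd hpe m n hm0 hme hn0 hnd H
  have hpQ : (0:ℚ) < (p:ℚ) - 1 := by
    have : (2:ℚ) ≤ p := by exact_mod_cast hp2
    linarith
  have h1' := Qfn_diff p e (m+1) m
  have h2' := Qfn_diff p d (n+1) n
  have hc : ((T p e (m+1) - T p e m : ℤ) : ℚ) < ((T p d (n+1) - T p d n : ℤ) : ℚ) := by
    exact_mod_cast hT
  have := div_lt_div_of_pos_right hc hpQ
  linarith

lemma Qfn_pred (p d : ℕ) (hd : 0 < d) (hp2 : 2 ≤ p) (hpd : Nat.Coprime p d) :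
    Qfn p d ((d:ℤ) - 1) = ((d:ℚ) - 1)/2 := by
  have hpQ : (0:ℚ) < (p:ℚ) - 1 := by
    have : (2:ℚ) ≤ p := by exact_mod_cast hp2
    linarith
  have hT := T_pred p d hd hpd
  have hTq : 2 * ((T p d ((d:ℤ)-1) : ℤ) : ℚ) = ((d:ℚ) - 1) * ((p:ℚ) - 1) := by
    exact_mod_cast congrArg (fun z : ℤ => (z : ℚ)) hT
  rw [Qfn_T]
  rw [div_eq_iff hpQ.ne']
  linarith

/-- lower bound for `Q(d-2)`. -/
lemma Qfn_pred2 (p d : ℕ) (hd : 2 ≤ d) (hdp : d < p) (hp2 : 2 ≤ p) (hpd : Nat.Coprime p d) :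
    ((d:ℚ) - 1)/2 - 1 < Qfn p d ((d:ℤ) - 2) := by
  have hd0 : 0 < d := by omega
  have hd' : (0:ℚ) < d := by exact_mod_cast hd0
  have hpQ : (0:ℚ) < (p:ℚ) - 1 := by
    have : (2:ℚ) ≤ p := by exact_mod_cast hp2
    linarith
  have hdpQ : (d:ℚ) ≤ (p:ℚ) - 1 := by
    have : (d:ℚ) + 1 ≤ (p:ℚ) := by exact_mod_cast hdp
    linarith
  have hd2 : (2:ℤ) ≤ (d:ℤ) := by exact_mod_cast hd
  have hub := deltaT_ub p d hd0 hpd ((d:ℤ) - 2) (by omega) (by omega)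
  rw [show (d:ℤ) - 2 + 1 = (d:ℤ) - 1 by ring] at hub
  have hco : (((d:ℤ) - 2 : ℤ) : ℚ) + 1 = (d:ℚ) - 1 := by push_cast; ring
  rw [hco] at hub
  have hQdiff := Qfn_diff p d ((d:ℤ) - 1) ((d:ℤ) - 2)
  have hQ1 := Qfn_pred p d hd0 hp2 hpd
  have hstep : Qfn p d ((d:ℤ)-1) - Qfn p d ((d:ℤ)-2) < 1 := by
    rw [hQdiff]
    rw [div_lt_iff₀ hpQ]
    have hkey : ((d:ℚ)-1)*((p:ℚ)-1)/d + 1 ≤ ((p:ℚ)-1) := by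
      rw [div_add' _ _ _ hd'.ne', div_le_iff₀ hd']
      nlinarith
    calc ((T p d ((d:ℤ)-1) - T p d ((d:ℤ)-2) : ℤ) : ℚ) < ((d:ℚ)-1)*((p:ℚ)-1)/d + 1 := hub
    _ ≤ ((p:ℚ)-1) := hkey
    _ = 1 * ((p:ℚ)-1) := by ring
  rw [hQ1] at hstep
  linarith

lemma Ik_pair (d e : ℕ) (hd : 0 < d) (he : 0 < e) {k : ℤ} {q q' : ℤ × ℤ}
    (hq : q ∈ Ik d e k) (hq' : q' ∈ Ik d e k) (hlt : q.1 < q'.1) :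
    q'.1 = q.1 + 1 ∧ q'.2 = q.2 - 1 ∧ (d:ℤ)*q.1 - e*q.2 = -(d:ℤ) ∧ (d:ℤ)*q'.1 - e*q'.2 = e := by
  rw [mem_Ik d e hd he] at hq hq'
  obtain ⟨hs, hbl, hbu, h10, h1e, h20, h2d⟩ := hq
  obtain ⟨hs', hbl', hbu', h10', h1e', h20', h2d'⟩ := hq'
  have hd1 : (1:ℤ) ≤ d := by exact_mod_cast hd
  have he1 : (1:ℤ) ≤ e := by exact_mod_cast he
  set t := q'.1 - q.1 with ht
  have ht1 : 1 ≤ t := by omega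
  have hcoord1 : q'.1 = q.1 + t := by omega
  have hcoord2 : q'.2 = q.2 - t := by omega
  have hband' : (d:ℤ)*q'.1 - e*q'.2 = ((d:ℤ)*q.1 - e*q.2) + ((d:ℤ)+e)*t := by
    rw [hcoord1, hcoord2]; ring
  have htle : t ≤ 1 := by
    by_contra hc
    push_neg at hc
    have h2t : ((d:ℤ)+e)*2 ≤ ((d:ℤ)+e)*t :=
      mul_le_mul_of_nonneg_left (by omega) (by omega)
    linarith
  have hteq : t = 1 := by omega
  rw [hteq] at hband' hcoord1 hcoord2
  constructor
  · omega
  constructor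
  · omega
  constructor
  · linarith
  · linarith

lemma Ik_two (d e : ℕ) (hd : 0 < d) (he : 0 < e) {k : ℤ} {q q' q'' : ℤ × ℤ}
    (hq : q ∈ Ik d e k) (hq' : q' ∈ Ik d e k) (hlt : q.1 < q'.1) (h'' : q'' ∈ Ik d e k) :
    q'' = q ∨ q'' = q' := by
  have hd1 : (1:ℤ) ≤ d := by exact_mod_cast hd
  have he1 : (1:ℤ) ≤ e := by exact_mod_cast he
  obtain ⟨ha1, ha2, ha3, ha4⟩ := Ik_pair d e hd he hq hq' hlt
  have hsq := ((mem_Ik d e hd he k q).1 hq).1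
  have hsq' := ((mem_Ik d e hd he k q').1 hq').1
  have hsq'' := ((mem_Ik d e hd he k q'').1 h'').1
  rcases lt_trichotomy q''.1 q.1 with h | h | h
  · exfalso
    obtain ⟨_, _, hb1, hb2⟩ := Ik_pair d e hd he h'' hq h
    rw [ha3] at hb2
    omega
  · left
    have : q''.2 = q.2 := by omega
    exact Prod.ext h this
  · rcases lt_trichotomy q''.1 q'.1 with h2 | h2 | h2
    · exfalso; omega
    · right
      have : q''.2 = q'.2 := by omega
      exact Prod.ext h2 this
    · exfalso
      obtain ⟨_, _, hb1, hb2⟩ := Ik_pair d e hd he hq' h'' h2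
      rw [ha4] at hb1
      omega

lemma first_coord_range (d e : ℕ) (hd : 0 < d) (he : 0 < e) {k : ℤ} {q₁ q₂ : ℤ × ℤ}
    (h1 : q₁ ∈ Ik d e (k-1)) (h2 : q₂ ∈ Ik d e (k+1)) :
    q₁.1 ≤ q₂.1 ∧ q₂.1 ≤ q₁.1 + 2 ∧ q₂.2 = q₁.2 + 2 - (q₂.1 - q₁.1) := by
  rw [mem_Ik d e hd he] at h1 h2
  obtain ⟨hs, hbl, hbu, h10, h1e, h20, h2d⟩ := h1
  obtain ⟨hs', hbl', hbu', h10', h1e', h20', h2d'⟩ := h2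
  have hd1 : (1:ℤ) ≤ d := by exact_mod_cast hd
  have he1 : (1:ℤ) ≤ e := by exact_mod_cast he
  set t := q₂.1 - q₁.1 with ht
  have hc2 : q₂.2 = q₁.2 + 2 - t := by omega
  have hband : (d:ℤ)*q₂.1 - e*q₂.2 = ((d:ℤ)*q₁.1 - e*q₁.2) + ((d:ℤ)+e)*t - 2*e := by
    rw [show q₂.1 = q₁.1 + t by omega, hc2]; ring
  have ht0 : 0 ≤ t := by
    by_contra hc
    push_neg at hc
    have h2t : ((d:ℤ)+e)*t ≤ ((d:ℤ)+e)*(-1) :=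
      mul_le_mul_of_nonneg_left (by omega) (by omega)
    linarith
  have ht2 : t ≤ 2 := by
    by_contra hc
    push_neg at hc
    have h2t : ((d:ℤ)+e)*3 ≤ ((d:ℤ)+e)*t :=
      mul_le_mul_of_nonneg_left (by omega) (by omega)
    linarith
  exact ⟨by omega, by omega, hc2⟩

end Stmt9


set_option maxHeartbeats 3200000 in
open Stmt9 in
/-- Let `p > 3·lcm(d,e)`.  The arithmetic polygon of `[-e,d]`, i.e. the piecewise linear
function through `(k, p_{[-e,d]}(k))`, `k = 0, …, d+e`, is convex; moreover
`(k, p_{[-e,d]}(k))` with `0 < k < d+e` is a vertex (point of strict convexity) if and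
only if the minimum defining `p_{[-e,d]}(k)` is attained at exactly one pair of `I_k`. -/
theorem stmt9 (p d e : ℕ) (hp : p.Prime) (hd : 0 < d) (he : 0 < e)
    (hcop : Nat.Coprime p (Nat.lcm d e)) (hpD : 3 * Nat.lcm d e < p)
    (f : ℤ → ℚ) (hf : ∀ k : ℤ, 0 ≤ k → k ≤ (d : ℤ) + e → IsPval p d e k (f k)) :
    (∀ k : ℤ, 0 < k → k < (d : ℤ) + e → 2 * f k ≤ f (k - 1) + f (k + 1)) ∧
      (∀ k : ℤ, 0 < k → k < (d : ℤ) + e →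
        (2 * f k < f (k - 1) + f (k + 1) ↔ (Vmin p d e k (f k)).ncard = 1)) := by
  have hd1 : (1:ℤ) ≤ d := by exact_mod_cast hd
  have he1 : (1:ℤ) ≤ e := by exact_mod_cast he
  have hlcm_pos : 0 < Nat.lcm d e := by
    have : d ∣ Nat.lcm d e := Nat.dvd_lcm_left d e
    rcases Nat.eq_zero_or_pos (Nat.lcm d e) with h | h
    · exfalso
      have := Nat.lcm_ne_zero (by omega : d ≠ 0) (by omega : e ≠ 0)
      omega
    · exact h
  have hdlcm : d ≤ Nat.lcm d e := Nat.le_of_dvd hlcm_pos (Nat.dvd_lcm_left d e)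
  have helcm : e ≤ Nat.lcm d e := Nat.le_of_dvd hlcm_pos (Nat.dvd_lcm_right d e)
  have hdp : d < p := by omega
  have hep : e < p := by omega
  have hp2 : 2 ≤ p := hp.two_le
  have hpd : Nat.Coprime p d := Nat.Coprime.coprime_dvd_right (Nat.dvd_lcm_left d e) hcop
  have hpe : Nat.Coprime p e := Nat.Coprime.coprime_dvd_right (Nat.dvd_lcm_right d e) hcop
  have hpQ : (0:ℚ) < (p:ℚ) - 1 := by
    have : (2:ℚ) ≤ p := by exact_mod_cast hp2
    linarith
  have h2d : 2*(d:ℚ) ≤ (p:ℚ) - 1 := by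
    have h' : (2*d + 1 : ℕ) ≤ p := by omega
    have hq : ((2*d+1 : ℕ):ℚ) ≤ (p:ℚ) := by exact_mod_cast h'
    push_cast at hq
    linarith
  have h2e : 2*(e:ℚ) ≤ (p:ℚ) - 1 := by
    have h' : (2*e + 1 : ℕ) ≤ p := by omega
    have hq : ((2*e+1 : ℕ):ℚ) ≤ (p:ℚ) := by exact_mod_cast h'
    push_cast at hq
    linarith
  have hgcd_pos : 0 < Nat.gcd d e := Nat.gcd_pos_of_pos_left e hd
  have slopeH : ∀ X : ℤ, ((Nat.gcd d e : ℕ):ℤ) ≤ X →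
      3*((d:ℚ)*e) ≤ ((p:ℚ)-1)*(X:ℚ) := by
    intro X hX
    have hlg : (Nat.gcd d e) * (Nat.lcm d e) = d * e := Nat.gcd_mul_lcm d e
    have hZ : (3*((d:ℤ)*e) : ℤ) ≤ ((p:ℤ)-1)*X := by
      have hG0 : (0:ℤ) ≤ (Nat.gcd d e : ℤ) := by positivity
      have hp1 : (0:ℤ) ≤ (p:ℤ) - 1 := by
        have : (1:ℤ) ≤ (p:ℤ) := by exact_mod_cast hp.one_lt.le
        omega
      have t1 : ((p:ℤ)-1)*(Nat.gcd d e : ℤ) ≤ ((p:ℤ)-1)*X :=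
        mul_le_mul_of_nonneg_left hX hp1
      have hp3 : (3 * Nat.lcm d e : ℤ) ≤ (p:ℤ) - 1 := by
        have : (3 * Nat.lcm d e + 1 : ℕ) ≤ p := by omega
        have := (Int.ofNat_le).2 this
        push_cast at this ⊢
        omega
      have t2 : (3 * (Nat.lcm d e : ℤ))*(Nat.gcd d e : ℤ) ≤ ((p:ℤ)-1)*(Nat.gcd d e : ℤ) :=
        mul_le_mul_of_nonneg_right (by push_cast at hp3 ⊢; omega) hG0
      have t3 : (3 * (Nat.lcm d e : ℤ))*(Nat.gcd d e : ℤ) = 3*((d:ℤ)*e) := by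
        have : ((Nat.gcd d e * Nat.lcm d e : ℕ) : ℤ) = ((d*e : ℕ) : ℤ) := by
          exact_mod_cast congrArg (fun z : ℕ => (z:ℤ)) hlg
        push_cast at this
        linarith [this]
      linarith
    have := (@Int.cast_le ℚ _ _ _).2 hZ
    push_cast at this
    push_cast
    linarith
  have hgd : ((Nat.gcd d e : ℕ):ℤ) ∣ (d:ℤ) := Int.natCast_dvd_natCast.2 (Nat.gcd_dvd_left d e)
  have hge : ((Nat.gcd d e : ℕ):ℤ) ∣ (e:ℤ) := Int.natCast_dvd_natCast.2 (Nat.gcd_dvd_right d e)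
  -- f values
  have getLeast : ∀ j : ℤ, 1 ≤ j → j ≤ (d:ℤ)+e-1 → IsLeast (Vals p d e j) (f j) := by
    intro j h1 h2
    rcases hf j (by omega) (by omega) with ⟨hj, _⟩ | ⟨hj, _⟩ | ⟨_, _, hL⟩
    · omega
    · omega
    · exact hL
  have hf0 : f 0 = 0 := by
    rcases hf 0 (by omega) (by omega) with ⟨_, hv⟩ | ⟨hj, _⟩ | ⟨hj, _, _⟩
    · exact hv
    · omega
    · omega
  have hfde : f ((d:ℤ)+e) = ((d:ℚ)+e)/2 := by
    rcases hf ((d:ℤ)+e) (by omega) (by omega) with ⟨hj, _⟩ | ⟨_, hv⟩ | ⟨_, hj, _⟩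
    · omega
    · exact hv
    · omega
  suffices key : ∀ k : ℤ, 0 < k → k < (d:ℤ)+e →
      2*f k ≤ f (k-1) + f (k+1) ∧
      (2*f k < f (k-1) + f (k+1) ↔ (Vmin p d e k (f k)).ncard = 1) by
    exact ⟨fun k a b => (key k a b).1, fun k a b => (key k a b).2⟩
  intro k hk0 hkde
  by_cases hk1 : k = 1
  · subst hk1
    have hI1 : Ik d e 1 = {((0:ℤ),(0:ℤ))} := by
      ext q
      rw [mem_Ik d e hd he, Set.mem_singleton_iff, Prod.ext_iff]
      constructor
      · rintro ⟨hs, _, _, h0, _, h20, _⟩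
        constructor <;> omega
      · rintro ⟨h1, h2⟩
        refine ⟨by omega, by rw [h1, h2]; omega, by rw [h1, h2]; omega,
          by omega, by omega, by omega, by omega⟩
    have hVals1 : Vals p d e 1 = {(0:ℚ)} := by
      rw [Vals, hI1, Set.image_singleton]
      simp [Qfn_zero]
    have hL1 := getLeast 1 (by omega) (by omega)
    have hf1 : f 1 = 0 := by
      have := hL1.1
      rw [hVals1] at this
      simpa using this
    have hf2pos : 0 < f (1+1) := by
      by_cases hde2 : (d:ℤ)+e = 2
      · have h2 : (1:ℤ)+1 = (d:ℤ)+e := by omega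
        rw [h2, hfde]
        have hcast : (d:ℚ)+e = 2 := by
          have : ((d+e : ℕ):ℤ) = 2 := by push_cast; omega
          have : ((d+e : ℕ):ℚ) = 2 := by exact_mod_cast this
          push_cast at this
          linarith
        rw [hcast]
        norm_num
      · have hL2 := getLeast 2 (by omega) (by omega)
        obtain ⟨q, hqI, hqv⟩ := hL2.1
        rw [mem_Ik d e hd he] at hqI
        obtain ⟨hs, _, _, h0, h1e', h20, h2d'⟩ := hqI
        rw [show (1:ℤ)+1 = 2 by norm_num, ← hqv]
        show 0 < Qfn p e q.1 + Qfn p d q.2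
        rcases (by omega : q.1 = 0 ∧ q.2 = 1 ∨ q.1 = 1 ∧ q.2 = 0) with ⟨ha, hb⟩ | ⟨ha, hb⟩
        · rw [ha, hb, Qfn_zero]
          have := Qfn_pos p d hp2 hdp 1 (by omega) (by omega)
          linarith
        · rw [ha, hb, Qfn_zero]
          have := Qfn_pos p e hp2 hep 1 (by omega) (by omega)
          linarith
    have hgoal1 : 2 * f 1 < f (1-1) + f (1+1) := by
      rw [show (1:ℤ)-1 = 0 by norm_num, hf0, hf1]
      linarith
    have hVmin1 : Vmin p d e 1 (f 1) = {((0:ℤ),(0:ℤ))} := by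
      ext q
      simp only [Vmin, Set.mem_setOf_eq, Set.mem_singleton_iff]
      constructor
      · rintro ⟨hqI, _⟩
        rw [hI1] at hqI
        exact hqI
      · intro hq
        subst hq
        refine ⟨by rw [hI1]; rfl, by simp [Qfn_zero, hf1]⟩
    refine ⟨le_of_lt hgoal1, ?_⟩
    constructor
    · intro _
      rw [hVmin1]
      exact Set.ncard_singleton _
    · intro _
      exact hgoal1

  by_cases hktop : k = (d:ℤ)+e-1
  · subst hktop
    have hde3 : (3:ℤ) ≤ (d:ℤ)+e := by omega
    have hItop : Ik d e ((d:ℤ)+e-1) = {(((e:ℤ)-1),((d:ℤ)-1))} := by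
      ext q
      rw [mem_Ik d e hd he, Set.mem_singleton_iff, Prod.ext_iff]
      constructor
      · rintro ⟨hs, _, _, h10, h1e, h20, h2d⟩
        constructor <;> omega
      · rintro ⟨h1, h2⟩
        dsimp only at h1 h2
        have hx : (d:ℤ)*((e:ℤ)-1) - e*((d:ℤ)-1) = (e:ℤ) - d := by ring
        refine ⟨by omega, ?_, ?_, by omega, by omega, by omega, by omega⟩
        · rw [h1, h2]
          linarith [hx]
        · rw [h1, h2]
          linarith [hx]
    have hQd := Qfn_pred p d hd hp2 hpd
    have hQe := Qfn_pred p e he hp2 hpe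
    have hLk := getLeast ((d:ℤ)+e-1) (by omega) (by omega)
    have hfk : f ((d:ℤ)+e-1) = ((d:ℚ)+e)/2 - 1 := by
      obtain ⟨q, hqI, hqv⟩ := hLk.1
      rw [hItop, Set.mem_singleton_iff] at hqI
      have hval : Qfn p e ((e:ℤ)-1) + Qfn p d ((d:ℤ)-1) = f ((d:ℤ)+e-1) := by
        rw [← hqv, hqI]
      rw [← hval, hQd, hQe]
      push_cast
      ring
    have hkm := getLeast ((d:ℤ)+e-2) (by omega) (by omega)
    obtain ⟨q, hqI, hqv⟩ := hkm.1
    rw [mem_Ik d e hd he] at hqI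
    obtain ⟨hs, hbl, hbu, h10, h1e, h20, h2dq⟩ := hqI
    have hflb : ((d:ℚ)+e)/2 - 2 < f ((d:ℤ)+e-2) := by
      rw [← hqv]
      show _ < Qfn p e q.1 + Qfn p d q.2
      rcases (by omega : q.1 = (e:ℤ)-1 ∧ q.2 = (d:ℤ)-2 ∨ q.1 = (e:ℤ)-2 ∧ q.2 = (d:ℤ)-1)
        with ⟨ha,hb⟩|⟨ha,hb⟩
      · have hd2 : 2 ≤ d := by omega
        have := Qfn_pred2 p d hd2 hdp hp2 hpd
        rw [ha, hb, hQe]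
        push_cast
        linarith
      · have he2 : 2 ≤ e := by omega
        have := Qfn_pred2 p e he2 hep hp2 hpe
        rw [ha, hb, hQd]
        push_cast
        linarith
    have hstrict : 2 * f ((d:ℤ)+e-1) < f ((d:ℤ)+e-1-1) + f ((d:ℤ)+e-1+1) := by
      rw [show (d:ℤ)+e-1-1 = (d:ℤ)+e-2 by ring, show (d:ℤ)+e-1+1 = (d:ℤ)+e by ring]
      rw [hfk, hfde]
      linarith
    have hVmint : Vmin p d e ((d:ℤ)+e-1) (f ((d:ℤ)+e-1)) = {(((e:ℤ)-1),((d:ℤ)-1))} := by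
      ext q'
      simp only [Vmin, Set.mem_setOf_eq, Set.mem_singleton_iff]
      constructor
      · rintro ⟨hqI', _⟩
        rw [hItop] at hqI'
        exact hqI'
      · intro hq'
        subst hq'
        refine ⟨by rw [hItop]; rfl, ?_⟩
        show Qfn p e ((e:ℤ)-1) + Qfn p d ((d:ℤ)-1) = _
        rw [hQd, hQe, hfk]
        push_cast
        ring
    exact ⟨le_of_lt hstrict,
      ⟨fun _ => by rw [hVmint]; exact Set.ncard_singleton _, fun _ => hstrict⟩⟩

  · -- interior case: 2 ≤ k ≤ d+e-2
    have hk2 : 2 ≤ k := by omega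
    have hk2' : k ≤ (d:ℤ)+e-2 := by omega
    have hLk := getLeast k (by omega) (by omega)
    have hLm := getLeast (k-1) (by omega) (by omega)
    have hLp := getLeast (k+1) (by omega) (by omega)
    have hmin : ∀ q ∈ Ik d e k, f k ≤ Qfn p e q.1 + Qfn p d q.2 := by
      intro q hq
      exact hLk.2 ⟨q, hq, rfl⟩
    have hminm : ∀ q ∈ Ik d e (k-1), f (k-1) ≤ Qfn p e q.1 + Qfn p d q.2 := by
      intro q hq
      exact hLm.2 ⟨q, hq, rfl⟩
    have hminp : ∀ q ∈ Ik d e (k+1), f (k+1) ≤ Qfn p e q.1 + Qfn p d q.2 := by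
      intro q hq
      exact hLp.2 ⟨q, hq, rfl⟩
    have memIk : ∀ (j a b : ℤ), a + b + 1 = j → -(d:ℤ) ≤ (d:ℤ)*a - e*b →
        (d:ℤ)*a - e*b ≤ e → 0 ≤ a → a < e → 0 ≤ b → b < d →
        ((a,b) : ℤ×ℤ) ∈ Ik d e j := by
      intro j a b h1 h2 h3 h4 h5 h6 h7
      rw [mem_Ik d e hd he]
      exact ⟨h1, h2, h3, h4, h5, h6, h7⟩
    obtain ⟨q1, hq1I, hq1v⟩ := hLm.1
    obtain ⟨q2, hq2I, hq2v⟩ := hLp.1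
    have hv1 : Qfn p e q1.1 + Qfn p d q1.2 = f (k-1) := by simpa using hq1v
    have hv2 : Qfn p e q2.1 + Qfn p d q2.2 = f (k+1) := by simpa using hq2v
    obtain ⟨ht0, ht2, hc2⟩ := first_coord_range d e hd he hq1I hq2I
    have hq1I' := (mem_Ik d e hd he (k-1) q1).1 hq1I
    have hq2I' := (mem_Ik d e hd he (k+1) q2).1 hq2I
    obtain ⟨hs1, hb1l, hb1u, h110, h11e, h120, h12d⟩ := hq1I'
    obtain ⟨hs2, hb2l, hb2u, h210, h21e, h220, h22d⟩ := hq2I'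
    -- two distinct minimizers force the reverse inequality
    have pairlemma : ∀ r r' : ℤ×ℤ, r ∈ Vmin p d e k (f k) → r' ∈ Vmin p d e k (f k) →
        r.1 < r'.1 → f (k-1) + f (k+1) ≤ 2 * f k := by
      intro r r' hr hr' hlt
      simp only [Vmin, Set.mem_setOf_eq] at hr hr'
      obtain ⟨hrI, hrv⟩ := hr
      obtain ⟨hrI', hrv'⟩ := hr'
      obtain ⟨hpa1, hpa2, hpa3, hpa4⟩ := Ik_pair d e hd he hrI hrI' hlt
      have hrmem := (mem_Ik d e hd he k r).1 hrI
      have hrmem' := (mem_Ik d e hd he k r').1 hrI'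
      obtain ⟨hsR, hblR, hbuR, h10R, h1eR, h20R, h2dR⟩ := hrmem
      obtain ⟨hsR', hblR', hbuR', h10R', h1eR', h20R', h2dR'⟩ := hrmem'
      have hs1I : ((r.1, r.2 - 1) : ℤ×ℤ) ∈ Ik d e (k-1) := by
        apply memIk
        · omega
        · have hx : (d:ℤ) * r.1 - e * (r.2 - 1) = ((d:ℤ)*r.1 - e*r.2) + e := by ring
          rw [hx, hpa3]
          omega
        · have hx : (d:ℤ) * r.1 - e * (r.2 - 1) = ((d:ℤ)*r.1 - e*r.2) + e := by ring
          rw [hx, hpa3]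
          omega
        · omega
        · omega
        · omega
        · omega
      have hs2I : ((r.1 + 1, r.2) : ℤ×ℤ) ∈ Ik d e (k+1) := by
        apply memIk
        · omega
        · have hx : (d:ℤ) * (r.1 + 1) - e * r.2 = ((d:ℤ)*r.1 - e*r.2) + d := by ring
          rw [hx, hpa3]
          omega
        · have hx : (d:ℤ) * (r.1 + 1) - e * r.2 = ((d:ℤ)*r.1 - e*r.2) + d := by ring
          rw [hx, hpa3]
          omega
        · omega
        · omega
        · omega
        · omega
      have hm1' : f (k-1) ≤ Qfn p e r.1 + Qfn p d (r.2 - 1) := by simpa using hminm _ hs1I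
      have hm2' : f (k+1) ≤ Qfn p e (r.1 + 1) + Qfn p d r.2 := by simpa using hminp _ hs2I
      have hrv2 : Qfn p e (r.1+1) + Qfn p d (r.2-1) = f k := by
        rw [← hpa1, ← hpa2]
        exact hrv'
      linarith [hrv]
    -- main case analysis giving: strict, or two explicit minimizers
    have hKey : (2*f k < f (k-1) + f (k+1)) ∨
        (∃ r1 r2 : ℤ×ℤ, r1 ∈ Vmin p d e k (f k) ∧ r2 ∈ Vmin p d e k (f k) ∧ r1.1 < r2.1 ∧
          2*f k ≤ f (k-1) + f (k+1)) := by
      rcases (by omega : q2.1 = q1.1 ∨ q2.1 = q1.1 + 1 ∨ q2.1 = q1.1 + 2) with heq1 | heq1 | heq1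
      · -- vertical case: use convexity of Q
        have heq2 : q2.2 = q1.2 + 2 := by omega
        left
        have hrI : ((q1.1, q1.2 + 1) : ℤ×ℤ) ∈ Ik d e k := by
          apply memIk
          · omega
          · have hx : (d:ℤ)*q1.1 - e*(q1.2+1) = ((d:ℤ)*q2.1 - e*q2.2) + e := by
              rw [heq1, heq2]; ring
            rw [hx]
            omega
          · have hx : (d:ℤ)*q1.1 - e*(q1.2+1) = ((d:ℤ)*q1.1 - e*q1.2) - e := by ring
            rw [hx]
            omega
          · omega
          · omega
          · omega
          · omega
        have hmid : f k ≤ Qfn p e q1.1 + Qfn p d (q1.2 + 1) := by simpa using hmin _ hrI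
        have hconv := Qfn_convex p d hd hpd hp2 h2d (q1.2 + 1) (by omega) (by omega)
        rw [show q1.2 + 1 - 1 = q1.2 by ring, show q1.2 + 1 + 1 = q1.2 + 2 by ring] at hconv
        rw [heq1, heq2] at hv2
        linarith
      · -- diagonal case: slopes
        have heq2 : q2.2 = q1.2 + 1 := by omega
        rw [heq1, heq2] at hv2
        rcases lt_trichotomy ((d:ℤ)*q1.1 - e*q1.2) ((e:ℤ)-d) with hB | hB | hB
        · left
          have hrI : ((q1.1 + 1, q1.2) : ℤ×ℤ) ∈ Ik d e k := by
            apply memIk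
            · omega
            · have hx : (d:ℤ)*(q1.1+1) - e*q1.2 = ((d:ℤ)*q1.1 - e*q1.2) + d := by ring
              rw [hx]; omega
            · have hx : (d:ℤ)*(q1.1+1) - e*q1.2 = ((d:ℤ)*q1.1 - e*q1.2) + d := by ring
              rw [hx]; omega
            · omega
            · omega
            · omega
            · omega
          have hmid : f k ≤ Qfn p e (q1.1 + 1) + Qfn p d q1.2 := by simpa using hmin _ hrI
          set X : ℤ := (e:ℤ)*(q1.2+1) - d*(q1.1+1) with hXdef
          have hXpos : 0 < X := by
            have hx : X = ((e:ℤ) - d) - ((d:ℤ)*q1.1 - e*q1.2) := by rw [hXdef]; ring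
            rw [hx]; omega
          have hXdvd : ((Nat.gcd d e : ℕ):ℤ) ∣ X :=
            dvd_sub (hge.mul_right _) (hgd.mul_right _)
          have H := slopeH X (Int.le_of_dvd hXpos hXdvd)
          have hXq : ((X:ℤ):ℚ) = (e:ℚ)*((q1.2:ℚ)+1) - (d:ℚ)*((q1.1:ℚ)+1) := by
            rw [hXdef]; push_cast; ring
          rw [hXq] at H
          have hslope := Qfn_slope_lt p d e hd he hpd hpe hp2 q1.1 q1.2 h110 (by omega)
            h120 (by omega) H
          linarith
        · -- both midpoints are in I_k
          have hr1I : ((q1.1 + 1, q1.2) : ℤ×ℤ) ∈ Ik d e k := by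
            apply memIk
            · omega
            · have hx : (d:ℤ)*(q1.1+1) - e*q1.2 = ((d:ℤ)*q1.1 - e*q1.2) + d := by ring
              rw [hx]; omega
            · have hx : (d:ℤ)*(q1.1+1) - e*q1.2 = ((d:ℤ)*q1.1 - e*q1.2) + d := by ring
              rw [hx]; omega
            · omega
            · omega
            · omega
            · omega
          have hr2I : ((q1.1, q1.2 + 1) : ℤ×ℤ) ∈ Ik d e k := by
            apply memIk
            · omega
            · have hx : (d:ℤ)*q1.1 - e*(q1.2+1) = ((d:ℤ)*q1.1 - e*q1.2) - e := by ring
              rw [hx]; omega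
            · have hx : (d:ℤ)*q1.1 - e*(q1.2+1) = ((d:ℤ)*q1.1 - e*q1.2) - e := by ring
              rw [hx]; omega
            · omega
            · omega
            · omega
            · omega
          have hm1 : f k ≤ Qfn p e (q1.1 + 1) + Qfn p d q1.2 := by simpa using hmin _ hr1I
          have hm2 : f k ≤ Qfn p e q1.1 + Qfn p d (q1.2 + 1) := by simpa using hmin _ hr2I
          have hle : 2*f k ≤ f (k-1) + f (k+1) := by linarith
          by_cases hstr : 2*f k < f (k-1) + f (k+1)
          · left; exact hstr
          · right
            have heqq : 2*f k = f (k-1) + f (k+1) := le_antisymm hle (not_lt.1 hstr)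
            have hval1 : Qfn p e (q1.1 + 1) + Qfn p d q1.2 = f k := by linarith
            have hval2 : Qfn p e q1.1 + Qfn p d (q1.2 + 1) = f k := by linarith
            refine ⟨(q1.1, q1.2 + 1), (q1.1 + 1, q1.2), ?_, ?_, by dsimp only; omega, hle⟩
            · simp only [Vmin, Set.mem_setOf_eq]
              refine ⟨hr2I, ?_⟩
              simpa using hval2
            · simp only [Vmin, Set.mem_setOf_eq]
              refine ⟨hr1I, ?_⟩
              simpa using hval1
        · left
          have hrI : ((q1.1, q1.2 + 1) : ℤ×ℤ) ∈ Ik d e k := by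
            apply memIk
            · omega
            · have hx : (d:ℤ)*q1.1 - e*(q1.2+1) = ((d:ℤ)*q1.1 - e*q1.2) - e := by ring
              rw [hx]; omega
            · have hx : (d:ℤ)*q1.1 - e*(q1.2+1) = ((d:ℤ)*q1.1 - e*q1.2) - e := by ring
              rw [hx]; omega
            · omega
            · omega
            · omega
            · omega
          have hmid : f k ≤ Qfn p e q1.1 + Qfn p d (q1.2 + 1) := by simpa using hmin _ hrI
          set X : ℤ := (d:ℤ)*(q1.1+1) - e*(q1.2+1) with hXdef
          have hXpos : 0 < X := by
            have hx : X = ((d:ℤ)*q1.1 - e*q1.2) - ((e:ℤ) - d) := by rw [hXdef]; ring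
            rw [hx]; omega
          have hXdvd : ((Nat.gcd d e : ℕ):ℤ) ∣ X :=
            dvd_sub (hgd.mul_right _) (hge.mul_right _)
          have H := slopeH X (Int.le_of_dvd hXpos hXdvd)
          have hXq : ((X:ℤ):ℚ) = (d:ℚ)*((q1.1:ℚ)+1) - (e:ℚ)*((q1.2:ℚ)+1) := by
            rw [hXdef]; push_cast; ring
          rw [hXq] at H
          have H' : 3 * ((e:ℚ)*d) ≤ ((p:ℚ)-1) * ((d:ℚ)*((q1.1:ℚ)+1) - (e:ℚ)*((q1.2:ℚ)+1)) := by
            linarith [H]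
          have hslope := Qfn_slope_lt p e d he hd hpe hpd hp2 q1.2 q1.1 h120 (by omega)
            h110 (by omega) H'
          linarith
      · -- horizontal case: use convexity of P
        have heq2 : q2.2 = q1.2 := by omega
        left
        have hrI : ((q1.1 + 1, q1.2) : ℤ×ℤ) ∈ Ik d e k := by
          apply memIk
          · omega
          · have hx : (d:ℤ)*(q1.1+1) - e*q1.2 = ((d:ℤ)*q1.1 - e*q1.2) + d := by ring
            rw [hx]; omega
          · have hx : (d:ℤ)*(q1.1+1) - e*q1.2 = ((d:ℤ)*q2.1 - e*q2.2) - d := by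
              rw [heq1, heq2]; ring
            rw [hx]; omega
          · omega
          · omega
          · omega
          · omega
        have hmid : f k ≤ Qfn p e (q1.1 + 1) + Qfn p d q1.2 := by simpa using hmin _ hrI
        have hconv := Qfn_convex p e he hpe hp2 h2e (q1.1 + 1) (by omega) (by omega)
        rw [show q1.1 + 1 - 1 = q1.1 by ring, show q1.1 + 1 + 1 = q1.1 + 2 by ring] at hconv
        rw [heq1, heq2] at hv2
        linarith
    -- wrap up
    rcases hKey with hstrict | ⟨r1, r2, hr1, hr2, hlt12, hle⟩
    · refine ⟨le_of_lt hstrict, ?_, fun _ => hstrict⟩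
      intro _
      obtain ⟨q0, hq0I, hq0v⟩ := hLk.1
      have hq0 : q0 ∈ Vmin p d e k (f k) := by
        simp only [Vmin, Set.mem_setOf_eq]
        exact ⟨hq0I, by simpa using hq0v⟩
      have hsub : Vmin p d e k (f k) ⊆ {q0} := by
        intro r hr
        rw [Set.mem_singleton_iff]
        by_contra hne
        have hrI : r ∈ Ik d e k := hr.1
        have hq0Ik : q0 ∈ Ik d e k := hq0I
        rcases lt_trichotomy r.1 q0.1 with h | h | h
        · exact absurd (pairlemma r q0 hr hq0 h) (by linarith)
        · have hs := ((mem_Ik d e hd he k r).1 hrI).1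
          have hs' := ((mem_Ik d e hd he k q0).1 hq0Ik).1
          exact hne (Prod.ext h (by omega))
        · exact absurd (pairlemma q0 r hq0 hr h) (by linarith)
      have heq : Vmin p d e k (f k) = {q0} :=
        Set.Subset.antisymm hsub (by
          intro x hx
          rw [Set.mem_singleton_iff] at hx
          rw [hx]
          exact hq0)
      rw [heq]
      exact Set.ncard_singleton _
    · have hgeq : f (k-1) + f (k+1) ≤ 2 * f k := pairlemma r1 r2 hr1 hr2 hlt12
      refine ⟨hle, ?_, ?_⟩
      · intro hstrict
        exfalso
        linarith
      · intro hcard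
        exfalso
        have hne : r1 ≠ r2 := by
          intro h
          rw [h] at hlt12
          exact lt_irrefl _ hlt12
        have hsub2 : ({r1, r2} : Set (ℤ×ℤ)) ⊆ Vmin p d e k (f k) := by
          intro x hx
          rcases hx with h | h
          · rw [h]; exact hr1
          · rw [Set.mem_singleton_iff] at h
            rw [h]; exact hr2
        have hVsub : Vmin p d e k (f k) ⊆ ({r1, r2} : Set (ℤ×ℤ)) := by
          intro x hx
          have hxI : x ∈ Ik d e k := hx.1
          rcases Ik_two d e hd he hr1.1 hr2.1 hlt12 hxI with h | h
          · exact Set.mem_insert_iff.2 (Or.inl h)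
          · exact Set.mem_insert_iff.2 (Or.inr (Set.mem_singleton_iff.2 h))
        have hfin : (Vmin p d e k (f k)).Finite :=
          Set.Finite.subset ((Set.finite_singleton r2).insert r1) hVsub
        have h2le : 2 ≤ (Vmin p d e k (f k)).ncard := by
          calc 2 = ({r1, r2} : Set (ℤ×ℤ)).ncard := (Set.ncard_pair hne).symm
          _ ≤ _ := Set.ncard_le_ncard hsub2 hfin
        omega
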